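/- Let U be a unitary on (ℂ²)^{⊗n} whose matrix entries in the computational basis have the form ⟨x|U|y⟩ = 2^{−n/2} exp(i Σ_{j,k} θ̃_{jk} x_j y_k) for some real matrix θ̃ (bilinear phase in the bits of x and y). Identify ℤ_{2^n} with n-bit strings; let V = {q·2^s : 0 ≤ q < 2^{n−s}} and let c ∈ ℤ_{2^n} satisfy 0 ≤ c < 2^s. Then for every x, |⟨x|U|c+V⟩|² = |⟨x|U|V⟩|², i.e. the measurement probabilities are independent of the coset shift c. -/

import Mathlib

/-- Bit value of a boolean, as a complex number. -/
def bitC (b : Bool) : ℂ := if b then 1 else 0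

/-- Shift invariance for unitaries with flat bilinear-phase entries
`⟨x|U|y⟩ = 2^{−n/2} exp(i Σ_{j,k} θ̃_{jk} x_j y_k)`.  Identifying `ℤ_{2^n}`
with `n`-bit strings (MSB first), let `V = {q·2^s : 0 ≤ q < 2^{n−s}}`, whose
elements are bitstrings with last `s` bits zero, and let `c` be a shift
`0 ≤ c < 2^s`, a bitstring whose first `n−s` bits are zero (so `c + v` just
sets the last `s` bits).  Then for every outcome `x`,
`|⟨x|U|c+V⟩|² = |⟨x|U|V⟩|²`. -/
theorem bilinear_phase_shift_invariance (n s : ℕ) (hs : s ≤ n)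
    (θ : Fin n → Fin n → ℝ)
    (c : Fin n → Bool) (hc : ∀ i : Fin n, i.val < n - s → c i = false)
    (x : Fin n → Bool) :
    ‖(∑ y : Fin n → Bool,
        ((Real.sqrt (2 ^ n) : ℂ)⁻¹ *
          Complex.exp (Complex.I * ∑ j : Fin n, ∑ k : Fin n,
            ((θ j k : ℝ) : ℂ) * bitC (x j) * bitC (y k))) *
        (if ∀ i : Fin n, n - s ≤ i.val → y i = c i
          then ((Real.sqrt (2 ^ (n - s)) : ℂ))⁻¹ else 0))‖ ^ 2
      =
    ‖(∑ y : Fin n → Bool,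
        ((Real.sqrt (2 ^ n) : ℂ)⁻¹ *
          Complex.exp (Complex.I * ∑ j : Fin n, ∑ k : Fin n,
            ((θ j k : ℝ) : ℂ) * bitC (x j) * bitC (y k))) *
        (if ∀ i : Fin n, n - s ≤ i.val → y i = false
          then ((Real.sqrt (2 ^ (n - s)) : ℂ))⁻¹ else 0))‖ ^ 2 := by
  classical
  set r : ℝ := ∑ j : Fin n, ∑ k : Fin n,
      θ j k * (if x j then 1 else 0) * (if c k then 1 else 0) with hr
  have hrc : ((r : ℝ) : ℂ) = ∑ j : Fin n, ∑ k : Fin n,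
      ((θ j k : ℝ) : ℂ) * bitC (x j) * bitC (c k) := by
    rw [hr]
    push_cast
    refine Finset.sum_congr rfl fun j _ => Finset.sum_congr rfl fun k _ => ?_
    simp [bitC, apply_ite (fun t : ℝ => (t : ℂ))]
  -- the xor-with-c involution
  set σ : (Fin n → Bool) → (Fin n → Bool) := fun y i => xor (y i) (c i) with hσ
  have hσinv : Function.Involutive σ := by
    intro y; funext i; simp [hσ]
  have key : (∑ y : Fin n → Bool,
        ((Real.sqrt (2 ^ n) : ℂ)⁻¹ *
          Complex.exp (Complex.I * ∑ j : Fin n, ∑ k : Fin n,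
            ((θ j k : ℝ) : ℂ) * bitC (x j) * bitC (y k))) *
        (if ∀ i : Fin n, n - s ≤ i.val → y i = c i
          then ((Real.sqrt (2 ^ (n - s)) : ℂ))⁻¹ else 0))
      = Complex.exp ((r : ℂ) * Complex.I) *
      (∑ y : Fin n → Bool,
        ((Real.sqrt (2 ^ n) : ℂ)⁻¹ *
          Complex.exp (Complex.I * ∑ j : Fin n, ∑ k : Fin n,
            ((θ j k : ℝ) : ℂ) * bitC (x j) * bitC (y k))) *
        (if ∀ i : Fin n, n - s ≤ i.val → y i = false
          then ((Real.sqrt (2 ^ (n - s)) : ℂ))⁻¹ else 0)) := by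
    rw [Finset.mul_sum]
    refine (Fintype.sum_bijective σ hσinv.bijective _ _ fun y => ?_).symm
    by_cases hy : ∀ i : Fin n, n - s ≤ i.val → y i = false
    · have hy' : ∀ i : Fin n, n - s ≤ i.val → σ y i = c i := by
        intro i hi; simp [hσ, hy i hi]
      rw [if_pos hy, if_pos hy']
      have hbit : ∀ k : Fin n, bitC (σ y k) = bitC (c k) + bitC (y k) := by
        intro k
        by_cases hk : n - s ≤ k.val
        · simp [hσ, hy k hk, bitC]
        · have h0 : c k = false := hc k (lt_of_not_ge hk)
          simp [hσ, h0, bitC]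
      have hsum : (∑ j : Fin n, ∑ k : Fin n,
            ((θ j k : ℝ) : ℂ) * bitC (x j) * bitC (σ y k))
          = ((r : ℝ) : ℂ) + ∑ j : Fin n, ∑ k : Fin n,
            ((θ j k : ℝ) : ℂ) * bitC (x j) * bitC (y k) := by
        rw [hrc, ← Finset.sum_add_distrib]
        refine Finset.sum_congr rfl fun j _ => ?_
        rw [← Finset.sum_add_distrib]
        refine Finset.sum_congr rfl fun k _ => ?_
        rw [hbit k]; ring
      rw [hsum]
      rw [mul_add, Complex.exp_add]
      ring_nf
    · have hy' : ¬ ∀ i : Fin n, n - s ≤ i.val → σ y i = c i := by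
        intro h
        apply hy
        intro i hi
        have h2 := h i hi
        simp only [hσ] at h2
        revert h2; cases y i <;> cases c i <;> simp
      rw [if_neg hy, if_neg hy']
      ring
  rw [key, norm_mul, Complex.norm_exp_ofReal_mul_I, one_mul]
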